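/- For every natural number n, the following identity among Bernoulli numbers holds: Σ_{k=0}^{n+3} C(n+3, k) · C(n+k+3, 3) · B_{n+k} = 0, where C(a, b) denotes the binomial coefficient (the Chen–Sun identity, obtained from the main identity at m = n, q = 3). -/

import Mathlib

section aux
open Polynomial Finset

noncomputable def LB : ℚ[X] →ₗ[ℚ] ℚ :=
  Polynomial.lsum fun i => LinearMap.toSpanSingleton ℚ ℚ (_root_.bernoulli i)

lemma LB_monomial (m : ℕ) (a : ℚ) : LB (monomial m a) = a * _root_.bernoulli m := by
  simp [LB, Polynomial.sum_monomial_index, LinearMap.toSpanSingleton_apply, smul_eq_mul]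

lemma LB_C_mul_X_pow (a : ℚ) (m : ℕ) : LB (C a * X ^ m) = a * _root_.bernoulli m := by
  rw [C_mul_X_pow_eq_monomial, LB_monomial]

lemma neg_one_pow_bernoulli (m : ℕ) :
    (-1 : ℚ) ^ m * _root_.bernoulli m = _root_.bernoulli m + if m = 1 then 1 else 0 := by
  rcases eq_or_ne m 1 with rfl | hm
  · norm_num [_root_.bernoulli_one]
  · rw [if_neg hm, add_zero, bernoulli_eq_bernoulli'_of_ne_one hm]
    rcases Nat.even_or_odd m with he | ho
    · rw [he.neg_one_pow, one_mul]
    · have h2 : 1 < m := lt_of_le_of_ne ho.pos (Ne.symm hm)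
      rw [bernoulli'_eq_zero_of_odd ho h2, mul_zero]

lemma X_add_one_pow_eq (m : ℕ) :
    ((X : ℚ[X]) + 1) ^ m = ∑ k ∈ range (m + 1), C (m.choose k : ℚ) * X ^ k := by
  rw [add_pow]
  refine Finset.sum_congr rfl fun k _ => ?_
  rw [one_pow, mul_one, mul_comm, C_eq_natCast]

lemma LB_X_add_one_pow (m : ℕ) :
    LB ((X + 1) ^ m) = _root_.bernoulli m + if m = 1 then 1 else 0 := by
  rw [X_add_one_pow_eq, map_sum]
  simp only [LB_C_mul_X_pow]
  rw [Finset.sum_range_succ, Nat.choose_self, _root_.sum_bernoulli]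
  push_cast; ring

lemma deriv_monomial_eval_zero (m : ℕ) (a : ℚ) :
    (derivative (monomial m a)).eval 0 = a * (if m = 1 then 1 else 0) := by
  rw [derivative_monomial, eval_monomial]
  match m with
  | 0 => simp
  | 1 => simp
  | (k + 2) => simp [Nat.succ_sub_one]

lemma LB_comp_X_add_one (f : ℚ[X]) :
    LB (f.comp (X + 1)) = LB f + f.derivative.eval 0 := by
  induction f using Polynomial.induction_on' with
  | add p q hp hq => rw [add_comp, map_add, hp, hq, map_add, derivative_add, eval_add]; ring
  | monomial m a =>
    rw [monomial_comp, ← smul_eq_C_mul, map_smul, smul_eq_mul, LB_X_add_one_pow, LB_monomial,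
      deriv_monomial_eval_zero]
    ring

lemma LB_comp_neg_X (f : ℚ[X]) :
    LB (f.comp (-X)) = LB f + f.derivative.eval 0 := by
  induction f using Polynomial.induction_on' with
  | add p q hp hq => rw [add_comp, map_add, hp, hq, map_add, derivative_add, eval_add]; ring
  | monomial m a =>
    have e : (monomial m a : ℚ[X]).comp (-X) = C (a * (-1) ^ m) * X ^ m := by
      rw [monomial_comp, neg_pow, map_mul, map_pow, map_neg, map_one]
      ring
    rw [e, LB_C_mul_X_pow, mul_assoc, neg_one_pow_bernoulli, LB_monomial,
      deriv_monomial_eval_zero]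
    ring

lemma deriv_comp_s (f : ℚ[X]) :
    derivative (f.comp (-(X + 1))) = -((derivative f).comp (-(X + 1))) := by
  rw [derivative_comp]
  simp

lemma LB_comp_s (f : ℚ[X]) : LB (f.comp (-(X + 1))) = LB f := by
  have e : f.comp (-(X + 1)) = (f.comp (-X)).comp (X + 1) := by
    rw [comp_assoc, neg_comp, X_comp]
  have d : derivative (f.comp (-X)) = -((derivative f).comp (-X)) := by
    rw [derivative_comp]; simp
  rw [e, LB_comp_X_add_one, LB_comp_neg_X, d, eval_neg, eval_comp]
  simp

lemma LB_antisymm (g : ℚ[X]) (hg : g.comp (-(X + 1)) = -g) : LB g = 0 := by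
  have h := LB_comp_s g
  rw [hg, map_neg] at h
  linarith

lemma d3_X_pow (m : ℕ) :
    derivative (derivative (derivative ((X : ℚ[X]) ^ (m + 3)))) =
      C (((m + 1) * (m + 2) * (m + 3) : ℕ) : ℚ) * X ^ m := by
  have e1 : m + 3 - 1 = m + 2 := by omega
  have e2 : m + 2 - 1 = m + 1 := by omega
  have e3 : m + 1 - 1 = m := by omega
  simp only [derivative_X_pow, derivative_C_mul, e1, e2, e3]
  push_cast [map_mul, map_add, map_one]
  ring

lemma six_choose_three (m : ℕ) : 6 * (m + 3).choose 3 = (m + 1) * ((m + 2) * ((m + 3) * 1)) :=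
  (Nat.descFactorial_eq_factorial_mul_choose (m + 3) 3).symm

lemma chen_sun_aux (n : ℕ) :
    ∑ k ∈ Finset.range (n + 4),
      ((n + 3).choose k : ℚ) * ((n + k + 3).choose 3 : ℚ) * _root_.bernoulli (n + k) = 0 := by
  set h : ℚ[X] := (X * (X + 1)) ^ (n + 3) with hh
  set g : ℚ[X] := derivative (derivative (derivative h)) with hgdef
  have s_comp : ∀ p : ℚ[X], p.comp (-(X+1)) = p → (derivative p).comp (-(X+1)) = -derivative p := by
    intro p hp
    have := deriv_comp_s p
    rw [hp] at this
    linear_combination this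
  have hsym : h.comp (-(X + 1)) = h := by
    have base : (-(X + 1) : ℚ[X]) * (-(X + 1) + 1) = X * (X + 1) := by ring
    rw [hh, pow_comp, mul_comp, add_comp, X_comp, one_comp, base]
  have h1 : (derivative h).comp (-(X + 1)) = -derivative h := s_comp h hsym
  have h2 : (derivative (derivative h)).comp (-(X + 1)) = derivative (derivative h) := by
    have := deriv_comp_s (derivative h)
    rw [h1] at this
    simp only [derivative_neg] at this
    linear_combination this
  have h3 : g.comp (-(X + 1)) = -g := s_comp _ h2
  have hLB : LB g = 0 := LB_antisymm g h3
  have hexp : h = ∑ k ∈ range (n + 4), C ((n + 3).choose k : ℚ) * X ^ (n + k + 3) := by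
    have e1 : h = X ^ (n + 3) * (X + 1) ^ (n + 3) := by rw [hh, mul_pow]
    rw [e1, X_add_one_pow_eq, Finset.mul_sum]
    refine Finset.sum_congr rfl fun k _ => ?_
    ring
  have hg : g = ∑ k ∈ range (n + 4),
      C (((n + 3).choose k : ℚ) * (((n + k + 1) * (n + k + 2) * (n + k + 3) : ℕ) : ℚ)) * X ^ (n + k) := by
    rw [hgdef, hexp, map_sum, map_sum, map_sum]
    refine Finset.sum_congr rfl fun k _ => ?_
    rw [derivative_C_mul, derivative_C_mul, derivative_C_mul, d3_X_pow, map_mul]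
    ring
  have hval : LB g = ∑ k ∈ range (n + 4),
      ((n + 3).choose k : ℚ) * (((n + k + 1) * (n + k + 2) * (n + k + 3) : ℕ) : ℚ) * _root_.bernoulli (n + k) := by
    rw [hg, map_sum]
    exact Finset.sum_congr rfl fun k _ => LB_C_mul_X_pow _ _
  have key : ∀ k, (((n + k + 1) * (n + k + 2) * (n + k + 3) : ℕ) : ℚ)
      = 6 * ((n + k + 3).choose 3 : ℚ) := by
    intro k
    have hn : ((n + k + 1) * (n + k + 2) * (n + k + 3) : ℕ) = 6 * (n + k + 3).choose 3 := by
      rw [six_choose_three (n + k)]; ring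
    rw [hn]
    push_cast
    ring
  rw [hval] at hLB
  simp only [key] at hLB
  have : (6 : ℚ) * ∑ k ∈ Finset.range (n + 4),
      ((n + 3).choose k : ℚ) * ((n + k + 3).choose 3 : ℚ) * _root_.bernoulli (n + k) = 0 := by
    rw [Finset.mul_sum, ← hLB]
    exact Finset.sum_congr rfl fun k _ => by ring
  linarith

end aux

theorem chen_sun_identity (n : ℕ) :
    ∑ k ∈ Finset.range (n + 4),
      ((n + 3).choose k : ℚ) * ((n + k + 3).choose 3 : ℚ) * bernoulli (n + k) = 0 :=
  chen_sun_aux n
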